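/- The complex eigenvalues of the $n \times n$ matrix $T_n$ with entries $(T_n)_{ij} = \mathbb{1}_{i\ge j} - \mathbb{1}_{i\le j}$ are exactly the $n$ numbers $\frac{1+\exp(\pi i (2j-1)/n)}{1-\exp(\pi i (2j-1)/n)}$ for $j = 1, \ldots, n$, i.e., these are precisely the roots of its characteristic polynomial $((\lambda+1)^n + (\lambda-1)^n)/2$. -/

import Mathlib

open Complex Polynomial Matrix

private lemma my_eval_charpoly {n : ℕ} (M : Matrix (Fin n) (Fin n) ℂ) (μ : ℂ) :
    M.charpoly.eval μ = (μ • (1 : Matrix (Fin n) (Fin n) ℂ) - M).det := by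
  rw [Matrix.charpoly, ← Polynomial.coe_evalRingHom, RingHom.map_det]
  congr 1
  ext i j
  by_cases h : i = j <;>
    simp [charmatrix_apply, Matrix.one_apply, h, Matrix.smul_apply, Matrix.sub_apply]

private lemma my_mem_spectrum_iff {n : ℕ} (M : Matrix (Fin n) (Fin n) ℂ) (μ : ℂ) :
    μ ∈ spectrum ℂ M ↔ M.charpoly.IsRoot μ := by
  rw [spectrum.mem_iff, Matrix.isUnit_iff_isUnit_det, isUnit_iff_ne_zero, not_ne_iff,
    Polynomial.IsRoot, my_eval_charpoly, Algebra.algebraMap_eq_smul_one]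

private lemma my_exp_ne_one {n j : ℕ} (hn : 1 ≤ n) :
    Complex.exp (Real.pi * Complex.I * (2 * (j : ℂ) - 1) / (n : ℂ)) ≠ 1 := by
  intro h
  rw [Complex.exp_eq_one_iff] at h
  obtain ⟨k, hk⟩ := h
  have hn0 : (n : ℂ) ≠ 0 := Nat.cast_ne_zero.mpr (by omega)
  have hpi : (Real.pi : ℂ) ≠ 0 := by
    simpa using Real.pi_ne_zero
  have h2 : (2 * (j : ℂ) - 1) = 2 * k * n := by
    field_simp at hk
    have hk' : (Real.pi : ℂ) * Complex.I * (2 * (j:ℂ) - 1)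
        = (Real.pi : ℂ) * Complex.I * (2 * (k:ℂ) * (n:ℂ)) := by linear_combination (Real.pi : ℂ) * Complex.I * hk
    exact mul_left_cancel₀ (mul_ne_zero hpi Complex.I_ne_zero) hk'
  have h3 : ((2 * (j : ℤ) - 1 : ℤ) : ℂ) = ((2 * k * n : ℤ) : ℂ) := by push_cast; linear_combination h2
  have h4 : (2 * (j : ℤ) - 1 : ℤ) = 2 * k * n := by exact_mod_cast h3
  obtain ⟨m, hm⟩ : ∃ m : ℤ, 2 * (j:ℤ) - 1 = 2 * m := ⟨k * n, by linarith [h4]⟩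
  omega

private lemma my_exp_pow {n j : ℕ} (hn : 1 ≤ n) (hj : 1 ≤ j) :
    Complex.exp (Real.pi * Complex.I * (2 * (j : ℂ) - 1) / (n : ℂ)) ^ n = -1 := by
  have hn0 : (n : ℂ) ≠ 0 := Nat.cast_ne_zero.mpr (by omega)
  rw [← Complex.exp_nat_mul]
  have : (n : ℂ) * (Real.pi * Complex.I * (2 * (j : ℂ) - 1) / (n : ℂ))
      = ((2 * j - 1 : ℕ) : ℂ) * (Real.pi * Complex.I) := by
    have : ((2 * j - 1 : ℕ) : ℂ) = 2 * (j:ℂ) - 1 := by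
      push_cast [Nat.cast_sub (by omega : 1 ≤ 2 * j)]; ring
    rw [this]; field_simp
  rw [this, Complex.exp_nat_mul, Complex.exp_pi_mul_I]
  exact Odd.neg_one_pow ⟨j - 1, by omega⟩

private lemma my_exp_inj {n : ℕ} (hn : 1 ≤ n) {j j' : ℕ} (hj : j ∈ Finset.Icc 1 n)
    (hj' : j' ∈ Finset.Icc 1 n)
    (h : Complex.exp (Real.pi * Complex.I * (2 * (j : ℂ) - 1) / (n : ℂ))
       = Complex.exp (Real.pi * Complex.I * (2 * (j' : ℂ) - 1) / (n : ℂ))) : j = j' := by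
  rw [Complex.exp_eq_exp_iff_exists_int] at h
  obtain ⟨k, hk⟩ := h
  have hn0 : (n : ℂ) ≠ 0 := Nat.cast_ne_zero.mpr (by omega)
  have hpi : (Real.pi : ℂ) ≠ 0 := by simpa using Real.pi_ne_zero
  field_simp at hk
  have hk' : (Real.pi:ℂ) * Complex.I * (2*(j:ℂ) - 1)
      = (Real.pi:ℂ) * Complex.I * (2*(j':ℂ) - 1 + 2*(k:ℂ)*(n:ℂ)) := by linear_combination (Real.pi : ℂ) * Complex.I * hk
  have h2 := mul_left_cancel₀ (mul_ne_zero hpi Complex.I_ne_zero) hk'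
  have h3 : ((j:ℤ) : ℂ) = (((j':ℤ) + k*(n:ℤ) : ℤ) : ℂ) := by push_cast; linear_combination h2/2
  have h4 : (j:ℤ) = (j':ℤ) + k*(n:ℤ) := by exact_mod_cast h3
  simp only [Finset.mem_Icc] at hj hj'
  have h5 : |(k:ℤ) * (n:ℤ)| < (n:ℤ) := by
    rw [show (k:ℤ)*(n:ℤ) = (j:ℤ) - j' by linarith]
    rw [abs_lt]; omega
  rw [abs_mul, Int.abs_natCast] at h5
  have h6 : |k| * (n:ℤ) < 1 * n := by simpa using h5
  have h7 : |k| < 1 := lt_of_mul_lt_mul_right h6 (by positivity)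
  have hk0 : k = 0 := by
    have := abs_nonneg k
    exact abs_eq_zero.mp (by omega)
  subst hk0; omega

private lemma aux_sum1 {n : ℕ} (i : Fin n) (σ : ℂ) :
    ∑ j : Fin n, (if j ≤ i then σ ^ (j:ℕ) else 0) = ∑ k ∈ Finset.range ((i:ℕ)+1), σ ^ k := by
  have h1 : ∑ j : Fin n, (if j ≤ i then σ ^ (j:ℕ) else 0)
      = ∑ k ∈ Finset.range n, (if k ≤ (i:ℕ) then σ ^ k else 0) := by
    rw [← Fin.sum_univ_eq_sum_range (fun k => if k ≤ (i:ℕ) then σ ^ k else 0)]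
    exact Finset.sum_congr rfl fun j _ => if_congr Fin.le_def rfl rfl
  rw [h1, ← Finset.sum_subset (Finset.range_subset_range.mpr i.isLt)
    (fun x hx hnx => if_neg (by simp at hx hnx ⊢; omega))]
  exact Finset.sum_congr rfl fun k hk => if_pos (by simp at hk; omega)

private lemma aux_sum2 {n : ℕ} (i : Fin n) (σ : ℂ) :
    ∑ j : Fin n, (if i ≤ j then σ ^ (j:ℕ) else 0)
      = ∑ k ∈ Finset.range n, σ ^ k - ∑ k ∈ Finset.range (i:ℕ), σ ^ k := by
  have h1 : ∑ j : Fin n, (if i ≤ j then σ ^ (j:ℕ) else 0)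
      = ∑ k ∈ Finset.range n, (if (i:ℕ) ≤ k then σ ^ k else 0) := by
    rw [← Fin.sum_univ_eq_sum_range (fun k => if (i:ℕ) ≤ k then σ ^ k else 0)]
    exact Finset.sum_congr rfl fun j _ => if_congr (by rw [Fin.le_def]) rfl rfl
  have h3 : ∑ k ∈ Finset.range (i:ℕ), σ ^ k
      = ∑ k ∈ Finset.range n, (if k < (i:ℕ) then σ ^ k else 0) := by
    rw [← Finset.sum_subset (Finset.range_subset_range.mpr (le_of_lt i.isLt))
      (fun x hx hnx => if_neg (by simp at hx hnx ⊢; omega))]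
    exact (Finset.sum_congr rfl fun k hk => (if_pos (by simp at hk; omega)).symm)
  have h2 : ∑ k ∈ Finset.range n, σ ^ k
      = ∑ k ∈ Finset.range n, (if (i:ℕ) ≤ k then σ ^ k else 0)
        + ∑ k ∈ Finset.range (i:ℕ), σ ^ k := by
    rw [h3, ← Finset.sum_add_distrib]
    refine Finset.sum_congr rfl fun k _ => ?_
    rcases le_or_gt (i:ℕ) k with h | h
    · simp [h, Nat.not_lt.mpr h]
    · simp [h, Nat.not_le.mpr h]
  rw [h1]
  linear_combination -h2

private lemma mob_inj {a b : ℂ} (ha : a ≠ 1) (hb : b ≠ 1)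
    (h : (1 + a) / (1 - a) = (1 + b) / (1 - b)) : a = b := by
  have ha' : 1 - a ≠ 0 := sub_ne_zero.mpr (Ne.symm ha)
  have hb' : 1 - b ≠ 0 := sub_ne_zero.mpr (Ne.symm hb)
  field_simp at h
  linear_combination h / 2

private lemma my_root {n : ℕ} (hn : 1 ≤ n) {j : ℕ} (hj1 : 1 ≤ j) :
    (Matrix.of (fun i j' : Fin n =>
        (if j' ≤ i then (1 : ℂ) else 0) - (if i ≤ j' then (1 : ℂ) else 0))).charpoly.IsRoot
      ((1 + Complex.exp (Real.pi * Complex.I * (2 * (j : ℂ) - 1) / (n : ℂ))) /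
       (1 - Complex.exp (Real.pi * Complex.I * (2 * (j : ℂ) - 1) / (n : ℂ)))) := by
  set ω := Complex.exp (Real.pi * Complex.I * (2 * (j : ℂ) - 1) / (n : ℂ)) with hω
  have hω1 : ω ≠ 1 := my_exp_ne_one hn
  have hωn : ω ^ n = -1 := my_exp_pow hn hj1
  have hω0 : ω ≠ 0 := Complex.exp_ne_zero _
  set μ := (1 + ω) / (1 - ω) with hμ
  rw [Polynomial.IsRoot, my_eval_charpoly, ← Matrix.exists_mulVec_eq_zero_iff]
  set σ := ω⁻¹ with hσ
  have hσ1 : σ ≠ 1 := by rw [hσ, ne_eq, inv_eq_one]; exact hω1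
  have hσ0 : σ ≠ 0 := inv_ne_zero hω0
  have hσn : σ ^ n = -1 := by rw [hσ, inv_pow, hωn]; norm_num
  have hσ1' : σ - 1 ≠ 0 := sub_ne_zero.mpr hσ1
  have h1ω : 1 - ω ≠ 0 := sub_ne_zero.mpr (Ne.symm hω1)
  have hμσ : μ * (σ - 1) = σ + 1 := by
    rw [hμ, hσ]
    field_simp
  refine ⟨fun i => σ ^ (i:ℕ), ?_, ?_⟩
  · intro h0
    have := congrFun h0 ⟨0, by omega⟩
    simp at this
  · funext i
    show ∑ j' : Fin n,
        (μ • (1 : Matrix (Fin n) (Fin n) ℂ) - Matrix.of (fun i j' : Fin n =>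
          (if j' ≤ i then (1 : ℂ) else 0) - (if i ≤ j' then (1 : ℂ) else 0))) i j' * σ ^ (j':ℕ)
        = 0
    have hterm : ∀ j' : Fin n,
        (μ • (1 : Matrix (Fin n) (Fin n) ℂ) - Matrix.of (fun i j' : Fin n =>
          (if j' ≤ i then (1 : ℂ) else 0) - (if i ≤ j' then (1 : ℂ) else 0))) i j' * σ ^ (j':ℕ)
        = (if i = j' then μ * σ ^ (j':ℕ) else 0)
          - ((if j' ≤ i then σ ^ (j':ℕ) else 0) - (if i ≤ j' then σ ^ (j':ℕ) else 0)) := by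
      intro j'
      simp only [Matrix.sub_apply, Matrix.smul_apply, Matrix.one_apply, Matrix.of_apply,
        smul_eq_mul]
      by_cases h1 : i = j' <;> by_cases h2 : j' ≤ i <;> by_cases h3 : i ≤ j' <;>
        first | (simp [h1, h2, h3]; try ring) | simp [h1, h2, h3]
    rw [Finset.sum_congr rfl fun j' _ => hterm j']
    rw [Finset.sum_sub_distrib, Finset.sum_sub_distrib, Finset.sum_ite_eq]
    simp only [Finset.mem_univ, if_true]
    rw [aux_sum1, aux_sum2, geom_sum_eq hσ1, geom_sum_eq hσ1,
      geom_sum_eq hσ1, hσn]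
    field_simp
    linear_combination (σ ^ (i:ℕ)) * hμσ

theorem stmt_3 (n : ℕ) (hn : 1 ≤ n) :
    spectrum ℂ (Matrix.of (fun i j : Fin n =>
        (if j ≤ i then (1 : ℂ) else 0) - (if i ≤ j then (1 : ℂ) else 0)))
      = {μ : ℂ | ∃ j ∈ Finset.Icc 1 n,
          μ = (1 + Complex.exp (Real.pi * Complex.I * (2 * (j : ℂ) - 1) / (n : ℂ))) /
              (1 - Complex.exp (Real.pi * Complex.I * (2 * (j : ℂ) - 1) / (n : ℂ)))} := by
  set T := Matrix.of (fun i j : Fin n =>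
      (if j ≤ i then (1 : ℂ) else 0) - (if i ≤ j then (1 : ℂ) else 0)) with hT
  set f : ℕ → ℂ := fun j =>
      (1 + Complex.exp (Real.pi * Complex.I * (2 * (j : ℂ) - 1) / (n : ℂ))) /
      (1 - Complex.exp (Real.pi * Complex.I * (2 * (j : ℂ) - 1) / (n : ℂ))) with hf
  have hroot : ∀ j ∈ Finset.Icc 1 n, T.charpoly.IsRoot (f j) := fun j hj =>
    my_root hn (Finset.mem_Icc.mp hj).1
  have hinj : Set.InjOn f (Finset.Icc 1 n) := by
    intro a ha b hb hab
    exact my_exp_inj hn (Finset.mem_coe.mp ha) (Finset.mem_coe.mp hb)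
      (mob_inj (my_exp_ne_one hn) (my_exp_ne_one hn) hab)
  have hp0 : T.charpoly ≠ 0 := T.charpoly_monic.ne_zero
  have hdeg : T.charpoly.natDegree = n := by
    rw [Matrix.charpoly_natDegree_eq_dim, Fintype.card_fin]
  set S : Finset ℂ := (Finset.Icc 1 n).image f with hS
  have hScard : S.card = n := by
    rw [hS, Finset.card_image_of_injOn hinj, Nat.card_Icc]; omega
  have hsub : S ⊆ T.charpoly.roots.toFinset := by
    intro μ hμ
    rw [Multiset.mem_toFinset, Polynomial.mem_roots hp0]
    obtain ⟨j, hj, rfl⟩ := Finset.mem_image.mp hμ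
    exact hroot j hj
  have hcard2 : T.charpoly.roots.toFinset.card ≤ S.card := by
    rw [hScard]
    calc T.charpoly.roots.toFinset.card
        ≤ Multiset.card T.charpoly.roots := Multiset.toFinset_card_le _
      _ ≤ T.charpoly.natDegree := T.charpoly.card_roots'
      _ = n := hdeg
  have hSeq : S = T.charpoly.roots.toFinset := Finset.eq_of_subset_of_card_le hsub hcard2
  ext μ
  simp only [Set.mem_setOf_eq]
  rw [my_mem_spectrum_iff]
  constructor
  · intro h
    have hm : μ ∈ S := by rw [hSeq, Multiset.mem_toFinset, Polynomial.mem_roots hp0]; exact h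
    obtain ⟨j, hj, hfj⟩ := Finset.mem_image.mp hm
    exact ⟨j, hj, hfj.symm⟩
  · rintro ⟨j, hj, rfl⟩
    exact hroot j hj
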